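/- Let α > 0, h > 0, 0 < ε < 1, U > 0 and β be reals satisfying conditions (C1) 0 < αh < 2/3, (C2) 0 < β < A(αh,ε) < 1, (C4) 1 − 2αh(1 − ε) + (αh)²ε(1 + ε) ≥ 0, and (C3) δ(h,αh,β) < ε. Suppose the quaternion sequence (q_k) satisfies q_{k+1} = (1 − αh(‖q_k‖² − 1)) q_k + (h/2) q_k w_k with each w_k pure imaginary and ‖w_k‖ ≤ U for all k, and let e_k = ‖q_k‖² − 1. Then the set S_δ = { e ∈ ℝ : |e| < δ(h,αh,β) } is a positively invariant attractor of the error sequence with region of attraction S_ε = { e ∈ ℝ : |e| ≤ ε }; that is: (i) if |e_k| < δ(h,αh,β) for some k then |e_j| < δ(h,αh,β) for all j ≥ k, and (ii) if |e_0| ≤ ε then |e_k| ≤ ε for all k and there exists K ∈ ℕ such that |e_k| < δ(h,αh,β) for all k ≥ K. -/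
import Mathlib

set_option maxHeartbeats 1000000 in
private lemma key_B (a ε : ℝ) (ha1 : 1/2 < a) (ha : a < 2/3) (hε0 : 0 < ε) (hε1 : ε < 1)
    (hM0 : 0 ≤ 1 - 2*a*(1-ε) + a^2*ε*(1+ε)) :
    (2*a-1)^2 ≤ ε^2*(2+ε)*(4*a+2*a^2-4*a^3-6*a^2*ε+a^4*ε+4*a^3*ε^2-a^4*ε^3) := by
  have ha0 : (0:ℝ) < a := by linarith
  rcases le_or_gt ε (1/4) with hc | hc
  · have hρ : 2*a-1 ≤ ε*(a*(2+a+a*ε)) := by nlinarith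
    have h2a : (0:ℝ) ≤ 2*a-1 := by linarith
    have h1 : (2*a-1)^2 ≤ (ε*(a*(2+a+a*ε)))^2 := pow_le_pow_left₀ h2a hρ 2
    have h2 : (a*(2+a+a*ε))^2 ≤ (2+ε)*(4*a+2*a^2-4*a^3-6*a^2*ε+a^4*ε+4*a^3*ε^2-a^4*ε^3) := by
      clear hρ h1 hM0 ha1 h2a
      nlinarith [mul_pos hε0 hε0, sq_nonneg (a*ε), mul_nonneg (mul_nonneg hε0.le hε0.le) hε0.le,
        mul_nonneg hε0.le (sq_nonneg a), mul_nonneg (sub_nonneg.2 hc) (sq_nonneg (a*ε)),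
        mul_pos ha0 hε0, sq_nonneg (2*a-1), mul_nonneg (mul_nonneg ha0.le ha0.le) ha0.le,
        mul_nonneg ha0.le hε0.le]
    calc (2*a-1)^2 ≤ (ε*(a*(2+a+a*ε)))^2 := h1
      _ = ε^2 * (a*(2+a+a*ε))^2 := by ring
      _ ≤ ε^2*((2+ε)*(4*a+2*a^2-4*a^3-6*a^2*ε+a^4*ε+4*a^3*ε^2-a^4*ε^3)) :=
          mul_le_mul_of_nonneg_left h2 (sq_nonneg ε)
      _ = ε^2*(2+ε)*(4*a+2*a^2-4*a^3-6*a^2*ε+a^4*ε+4*a^3*ε^2-a^4*ε^3) := by ring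
  · have hB : (64:ℝ)/81 ≤ 4*a+2*a^2-4*a^3-6*a^2*ε+a^4*ε+4*a^3*ε^2-a^4*ε^3 := by
      clear hM0
      nlinarith [sq_nonneg (ε-1), sq_nonneg (a-2/3), mul_nonneg (sub_nonneg.2 hε1.le) (sq_nonneg a),
        mul_nonneg (mul_nonneg ha0.le ha0.le) (mul_nonneg hε0.le (sub_nonneg.2 hε1.le)),
        sq_nonneg (a*ε), mul_nonneg (sub_nonneg.2 ha.le) hε0.le,
        mul_nonneg (mul_nonneg (sub_nonneg.2 ha.le) hε0.le) hε0.le,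
        mul_nonneg (mul_nonneg ha0.le hε0.le) hε0.le]
    have h9 : (1:ℝ)/9 ≤ ε^2*(2+ε)*(4*a+2*a^2-4*a^3-6*a^2*ε+a^4*ε+4*a^3*ε^2-a^4*ε^3) := by
      nlinarith [mul_pos hε0 hε0, mul_pos (mul_pos hε0 hε0) hε0,
        mul_nonneg (mul_nonneg hε0.le hε0.le)
          (by linarith : (0:ℝ) ≤ 4*a+2*a^2-4*a^3-6*a^2*ε+a^4*ε+4*a^3*ε^2-a^4*ε^3)]
    nlinarith [sq_nonneg (2*a-1)]

set_option maxHeartbeats 1000000 in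
private lemma assemble_nonpos (P x t T G ε : ℝ) (hε0 : 0 < ε) (hε1 : ε < 1)
    (hx1 : -ε ≤ x) (hx2 : x ≤ ε) (ht0 : 0 ≤ t) (htT : t ≤ T)
    (hf : x*G ≤ 0) (hGsq : G^2 ≤ P) :
    (x*G + (1+x)*t)^2 ≤ P*x^2 + (1+ε)^2*T^2 := by
  have h1x : (0:ℝ) < 1 + x := by linarith
  have hpt0 : (0:ℝ) ≤ (1+x)*t := mul_nonneg h1x.le ht0
  have hpt : (1+x)*t ≤ (1+ε)*T := mul_le_mul (by linarith) htT ht0 (by linarith)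
  have hptsq : ((1+x)*t)^2 ≤ ((1+ε)*T)^2 := pow_le_pow_left₀ hpt0 hpt 2
  have hcross : (x*G)*((1+x)*t) ≤ 0 := mul_nonpos_of_nonpos_of_nonneg hf hpt0
  nlinarith [mul_nonneg (sub_nonneg.2 hGsq) (sq_nonneg x), hcross, hptsq]

set_option maxHeartbeats 1000000 in
private lemma assemble_neg (P x t T G ε : ℝ) (hε0 : 0 < ε) (hε1 : ε < 1)
    (hx : x < 0) (hx1 : -ε ≤ x) (ht0 : 0 ≤ t) (htT : t ≤ T) (hf : 0 < x*G)
    (hGsq : G^2 ≤ P) (hc0 : 0 < P - G^2) (hKey2 : G^2 ≤ (2+ε)*ε*(P-G^2)) :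
    (x*G + (1+x)*t)^2 ≤ P*x^2 + (1+ε)^2*T^2 := by
  have hT0 : 0 ≤ T := le_trans ht0 htT
  have s3 : (2*((x*G)*t))*(P-G^2) ≤ (x^2*(P-G^2) + (2+ε)*ε*t^2)*(P-G^2) := by
    nlinarith [sq_nonneg (x*(P-G^2) - G*t), mul_le_mul_of_nonneg_right hKey2 (sq_nonneg t)]
  have s4 : 2*((x*G)*t) ≤ x^2*(P-G^2) + (2+ε)*ε*t^2 := le_of_mul_le_mul_right s3 hc0
  have h5 : (x*G)*t*x ≤ 0 :=
    mul_nonpos_of_nonneg_of_nonpos (mul_nonneg hf.le ht0) hx.le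
  have h6 : t^2 ≤ T^2 := pow_le_pow_left₀ ht0 htT 2
  have h7 : (1+x)^2 ≤ 1 := by nlinarith
  nlinarith [s4, h5, h6, h7, mul_le_mul_of_nonneg_left h6 (by positivity : (0:ℝ) ≤ (1+ε)^2),
    sq_nonneg t, mul_nonneg (mul_nonneg hf.le ht0) ht0]

set_option maxHeartbeats 1000000 in
private lemma assemble_pos (P M x t T G ε : ℝ) (hε0 : 0 < ε) (hε1 : ε < 1)
    (hx : 0 < x) (hx2 : x ≤ ε) (ht0 : 0 ≤ t) (htT : t ≤ T)
    (hGpos : 0 < G) (hGM : G ≤ M) (hM0 : 0 ≤ M) (hGsq : G^2 ≤ P) :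
    (x*G + (1+x)*t)^2 ≤ P*x^2 + 2*M*ε*(1+ε)*T + (1+ε)^2*T^2 := by
  have hT0 : 0 ≤ T := le_trans ht0 htT
  have h1x : (0:ℝ) < 1 + x := by linarith
  have hpt0 : (0:ℝ) ≤ (1+x)*t := mul_nonneg h1x.le ht0
  have hpt : (1+x)*t ≤ (1+ε)*T := mul_le_mul (by linarith) htT ht0 (by linarith)
  have hptsq : ((1+x)*t)^2 ≤ ((1+ε)*T)^2 := pow_le_pow_left₀ hpt0 hpt 2
  have c1 : x*G ≤ ε*M := mul_le_mul hx2 hGM hGpos.le hε0.le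
  have c2 : (x*G)*(1+x) ≤ (ε*M)*(1+ε) :=
    mul_le_mul c1 (by linarith) h1x.le (mul_nonneg hε0.le hM0)
  have c3 : ((x*G)*(1+x))*t ≤ ((ε*M)*(1+ε))*T := by
    apply mul_le_mul c2 htT ht0
    have : (0:ℝ) ≤ ε*M := mul_nonneg hε0.le hM0
    nlinarith
  nlinarith [mul_nonneg (sub_nonneg.2 hGsq) (sq_nonneg x), c3, hptsq]

set_option maxHeartbeats 1000000 in
private lemma step_ineq (a ε A M x t T : ℝ)
    (ha0 : 0 < a) (ha : a < 2/3) (hε0 : 0 < ε) (hε1 : ε < 1)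
    (hA : A = a*(1-ε)*(2-a*ε)*(2-2*a-a*(2-a)*ε+a^2*ε^2))
    (hM : M = 1-2*a*(1-ε)+a^2*ε*(1+ε)) (hM0 : 0 ≤ M)
    (hA0 : 0 < A)
    (hx1 : -ε ≤ x) (hx2 : x ≤ ε) (ht0 : 0 ≤ t) (htT : t ≤ T) :
    (x*(1-2*a+(a^2-2*a)*x+a^2*x^2) + (1+x)*t)^2
      ≤ (1-A)*x^2 + 2*M*ε*(1+ε)*T + (1+ε)^2*T^2 := by
  have hT0 : 0 ≤ T := le_trans ht0 htT
  have h1x : (0:ℝ) < 1 + x := by linarith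
  have h1e : (0:ℝ) < 1 + ε := by linarith
  have hMe : (0:ℝ) ≤ 2*M*ε*(1+ε)*T := by
    nlinarith [mul_nonneg (mul_nonneg (mul_nonneg hM0 hε0.le) h1e.le) hT0]
  set G : ℝ := 1-2*a+(a^2-2*a)*x+a^2*x^2 with hG
  have hGlow : (2-2*a-a*(2-a)*ε+a^2*ε^2) - 1 ≤ G := by
    have hfac : (0:ℝ) ≤ (ε - x) * (a*(2-a-a*(x+ε))) := by
      apply mul_nonneg (by linarith)
      have h9 : 0 < 2-a-a*(x+ε) := by nlinarith
      positivity
    nlinarith [hfac]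
  have hKε : (0:ℝ) < 2-2*a-a*(2-a)*ε+a^2*ε^2 := by
    by_contra hk
    push_neg at hk
    have hpos : (0:ℝ) < a*(1-ε)*(2-a*ε) := by nlinarith
    nlinarith [mul_nonneg hpos.le (neg_nonneg.2 hk)]
  have h1G : (0:ℝ) < 1 + G := by linarith
  have hGsq : G^2 ≤ 1 - A := by
    have hid : 1 - G^2 = (a*(1+x))*((2-a*x)*(1+G)) := by rw [hG]; ring
    have e1 : a*(1-ε) ≤ a*(1+x) := by nlinarith
    have e2 : (2-a*ε)*(2-2*a-a*(2-a)*ε+a^2*ε^2) ≤ (2-a*x)*(1+G) := by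
      apply mul_le_mul (by nlinarith) (by linarith) hKε.le (by nlinarith)
    have e3 : A ≤ (a*(1+x))*((2-a*x)*(1+G)) := by
      rw [hA]
      calc a*(1-ε)*(2-a*ε)*(2-2*a-a*(2-a)*ε+a^2*ε^2)
          = (a*(1-ε))*((2-a*ε)*(2-2*a-a*(2-a)*ε+a^2*ε^2)) := by ring
        _ ≤ (a*(1+x))*((2-a*x)*(1+G)) :=
            mul_le_mul e1 e2 (mul_nonneg (by nlinarith) hKε.le)
              (mul_nonneg ha0.le h1x.le)
    linarith [hid, e3]
  rcases le_or_gt (x*G) 0 with hf | hf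
  · have := assemble_nonpos (1-A) x t T G ε hε0 hε1 hx1 hx2 ht0 htT hf hGsq
    linarith
  · rcases lt_trichotomy x 0 with hx | hx | hx
    · have hGneg : G < 0 := by
        rcases lt_trichotomy G 0 with h|h|h
        · exact h
        · exfalso; rw [h] at hf; simp at hf
        · exfalso; nlinarith
      have hGge : 1-2*a ≤ G := by
        have hfac : (0:ℝ) ≤ (-x) * (a*(2-a-a*x)) := by
          apply mul_nonneg (by linarith)
          have h9 : 0 < 2-a-a*x := by nlinarith
          positivity
        nlinarith [hfac]
      have ha12 : 1/2 < a := by nlinarith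
      have hG2 : G^2 ≤ (2*a-1)^2 := by
        nlinarith [mul_nonneg (by linarith : (0:ℝ) ≤ 2*a-1-G) (by linarith : (0:ℝ) ≤ 2*a-1+G)]
      have hM0' : 0 ≤ 1 - 2*a*(1-ε) + a^2*ε*(1+ε) := by rw [hM] at hM0; exact hM0
      have KEY := key_B a ε ha12 ha hε0 hε1 hM0'
      have hεB : ε*(4*a+2*a^2-4*a^3-6*a^2*ε+a^4*ε+4*a^3*ε^2-a^4*ε^3) = 1-A-(2*a-1)^2 := by
        rw [hA]; ring
      have h2 : G^2 ≤ (2+ε)*ε*(1-A-(2*a-1)^2) := by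
        calc G^2 ≤ (2*a-1)^2 := hG2
          _ ≤ ε^2*(2+ε)*(4*a+2*a^2-4*a^3-6*a^2*ε+a^4*ε+4*a^3*ε^2-a^4*ε^3) := KEY
          _ = (2+ε)*ε*(ε*(4*a+2*a^2-4*a^3-6*a^2*ε+a^4*ε+4*a^3*ε^2-a^4*ε^3)) := by ring
          _ = (2+ε)*ε*(1-A-(2*a-1)^2) := by rw [hεB]
      have hKey2 : G^2 ≤ (2+ε)*ε*((1-A)-G^2) := by
        calc G^2 ≤ (2+ε)*ε*(1-A-(2*a-1)^2) := h2
          _ ≤ (2+ε)*ε*((1-A)-G^2) := by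
              apply mul_le_mul_of_nonneg_left (by linarith) (by positivity)
      have hc0 : 0 < (1-A) - G^2 := by
        by_contra hk
        push_neg at hk
        have h3 : (2+ε)*ε*((1-A)-G^2) ≤ 0 :=
          mul_nonpos_of_nonneg_of_nonpos (by positivity) (by linarith)
        nlinarith [mul_pos (neg_pos.2 hGneg) (neg_pos.2 hGneg)]
      have := assemble_neg (1-A) x t T G ε hε0 hε1 hx hx1 ht0 htT hf hGsq hc0 hKey2
      linarith
    · exfalso; rw [hx] at hf; simp at hf
    · have hGpos : 0 < G := by
        rcases lt_trichotomy G 0 with h|h|h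
        · exfalso; nlinarith
        · exfalso; rw [h] at hf; simp at hf
        · exact h
      have hG12 : G ≤ 1-2*a := by
        have hfac : (0:ℝ) ≤ x * (a*(2-a-a*x)) := by
          apply mul_nonneg hx.le
          have h9 : 0 < 2-a-a*x := by nlinarith
          positivity
        nlinarith [hfac]
      have hGM : G ≤ M := by rw [hM]; nlinarith
      have := assemble_pos (1-A) M x t T G ε hε0 hε1 hx hx2 ht0 htT hGpos hGM hM0 hGsq
      linarith

private lemma quat_step_norm (p r : Quaternion ℝ) (c s : ℝ) (hr : r.re = 0) :
    ‖c • p + s • (p * r)‖ ^ 2 = ‖p‖ ^ 2 * (c ^ 2 + s ^ 2 * ‖r‖ ^ 2) := by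
  have h1 : c • p + s • (p * r) = p * ((c : Quaternion ℝ) + s • r) := by
    rw [mul_add, Quaternion.mul_coe_eq_smul, mul_smul_comm]
  rw [h1, norm_mul, mul_pow]
  congr 1
  have h2 : ∀ z : Quaternion ℝ, ‖z‖ ^ 2 = Quaternion.normSq z := by
    intro z
    rw [Quaternion.normSq_eq_norm_mul_self, sq]
  rw [h2, h2]
  rw [Quaternion.normSq_def', Quaternion.normSq_def']
  simp [hr]
  ring

private lemma abs_lt_of_sq_lt' (y d : ℝ) (hd : 0 ≤ d) (h : y^2 < d^2) : |y| < d := by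
  by_contra hk
  push_neg at hk
  nlinarith [sq_abs y, abs_nonneg y]

private lemma abs_le_of_sq_le' (y d : ℝ) (hd : 0 ≤ d) (h : y^2 ≤ d^2) : |y| ≤ d := by
  by_contra hk
  push_neg at hk
  nlinarith [sq_abs y, abs_nonneg y]

set_option maxHeartbeats 1000000 in
/-- The set `S_δ = {e : |e| < δ}` is a positively invariant attractor of the
error dynamics of the Euler-discretized stably embedded satellite attitude
kinematics, with region of attraction `S_ε = {e : |e| ≤ ε}`. -/
theorem error_invariant_attractor (α h ε U β A N δ : ℝ)
    (hα : 0 < α) (hh : 0 < h) (hε0 : 0 < ε) (hε1 : ε < 1) (hU : 0 < U)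
    (hA : A = α * h * (1 - ε) * (2 - α * h * ε) *
      (2 - 2 * (α * h) - α * h * (2 - α * h) * ε + (α * h) ^ 2 * ε ^ 2))
    (hN : N = (1 - 2 * (α * h) * (1 - ε) + (α * h) ^ 2 * ε * (1 + ε)) *
        (ε * (1 + ε)) * U ^ 2 / 2 + (1 + ε) ^ 2 * (h ^ 2 * U ^ 4 / 16))
    (hδ : δ = h * Real.sqrt (N / (A - β)))
    (hC1 : 0 < α * h ∧ α * h < 2 / 3)
    (hC2 : 0 < β ∧ β < A ∧ A < 1)
    (hC4 : 1 - 2 * (α * h) * (1 - ε) + (α * h) ^ 2 * ε * (1 + ε) ≥ 0)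
    (hC3 : δ < ε)
    (q w : ℕ → Quaternion ℝ) (hw : ∀ k, (w k).re = 0)
    (hwU : ∀ k, ‖w k‖ ≤ U)
    (hdyn : ∀ k, q (k + 1) =
      (1 - α * h * (‖q k‖ ^ 2 - 1)) • q k + (h / 2) • (q k * w k))
    (e : ℕ → ℝ) (he : ∀ k, e k = ‖q k‖ ^ 2 - 1) :
    (∀ k, |e k| < δ → ∀ j, k ≤ j → |e j| < δ) ∧
    (|e 0| ≤ ε → (∀ k, |e k| ≤ ε) ∧ ∃ K, ∀ k, K ≤ k → |e k| < δ) := by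
  obtain ⟨hah0, hah⟩ := hC1
  obtain ⟨hβ0, hβA, hA1⟩ := hC2
  have hAβ : 0 < A - β := by linarith
  have hA0 : 0 < A := lt_trans hβ0 hβA
  -- positivity of N
  have hN0 : 0 < N := by
    rw [hN]
    have h1 : 0 ≤ (1 - 2 * (α * h) * (1 - ε) + (α * h) ^ 2 * ε * (1 + ε)) *
        (ε * (1 + ε)) * U ^ 2 / 2 := by
      apply div_nonneg _ (by norm_num)
      apply mul_nonneg (mul_nonneg hC4 (by positivity)) (sq_nonneg U)
    have h2 : 0 < (1 + ε) ^ 2 * (h ^ 2 * U ^ 4 / 16) := by positivity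
    linarith
  have hδsq : δ^2 = h^2 * (N / (A - β)) := by
    rw [hδ, mul_pow, Real.sq_sqrt (le_of_lt (div_pos hN0 hAβ))]
  have hδ0 : 0 < δ := by
    rw [hδ]
    exact mul_pos hh (Real.sqrt_pos.2 (div_pos hN0 hAβ))
  -- recursion for the error sequence
  have hrec : ∀ k, e (k+1) =
      (e k)*(1-2*(α*h)+((α*h)^2-2*(α*h))*(e k)+(α*h)^2*(e k)^2)
        + (1+(e k))*((h^2/4)*‖w k‖^2) := by
    intro k
    have h1 := quat_step_norm (q k) (w k) (1 - α*h*(‖q k‖^2-1)) (h/2) (hw k)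
    have hq2 : ‖q k‖^2 = 1 + e k := by rw [he k]; ring
    rw [he (k+1), hdyn k, h1, hq2]
    ring
  -- one-step Lyapunov decrease
  have hstep : ∀ k, |e k| ≤ ε →
      (e (k+1))^2 ≤ (1-A)*(e k)^2 + (A-β)*δ^2 := by
    intro k hk
    obtain ⟨hx1, hx2⟩ := abs_le.mp hk
    have ht0 : (0:ℝ) ≤ (h^2/4)*‖w k‖^2 := by positivity
    have htT : (h^2/4)*‖w k‖^2 ≤ h^2*U^2/4 := by
      have := pow_le_pow_left₀ (norm_nonneg (w k)) (hwU k) 2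
      nlinarith [sq_nonneg h]
    have h1 := step_ineq (α*h) ε A
      (1 - 2*(α*h)*(1-ε) + (α*h)^2*ε*(1+ε)) (e k) ((h^2/4)*‖w k‖^2) (h^2*U^2/4)
      hah0 hah hε0 hε1 (by rw [hA]; try ring) (by ring) hC4 hA0 hx1 hx2 ht0 htT
    have hTN : 2*(1 - 2*(α*h)*(1-ε) + (α*h)^2*ε*(1+ε))*ε*(1+ε)*(h^2*U^2/4)
        + (1+ε)^2*(h^2*U^2/4)^2 = h^2*N := by
      rw [hN]; ring
    have hq : (A-β)*δ^2 = h^2*N := by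
      rw [hδsq]
      field_simp
    rw [hrec k]
    linarith
  -- invariance of S_δ for one step
  have hdec1 : ∀ k, |e k| < δ → |e (k+1)| < δ := by
    intro k hk
    have hkε : |e k| ≤ ε := le_of_lt (lt_trans hk hC3)
    have h1 := hstep k hkε
    have hx2 : (e k)^2 < δ^2 := by
      nlinarith [sq_abs (e k), abs_nonneg (e k)]
    have h2 : (e (k+1))^2 < δ^2 := by
      nlinarith [mul_lt_mul_of_pos_left hx2 (by linarith : (0:ℝ) < 1-A),
        mul_pos hβ0 (mul_pos hδ0 hδ0)]
    exact abs_lt_of_sq_lt' _ _ hδ0.le h2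
  -- decrease outside S_δ
  have hdec2 : ∀ k, |e k| ≤ ε → δ ≤ |e k| → (e (k+1))^2 ≤ (1-β)*(e k)^2 := by
    intro k h1 h2
    have h3 := hstep k h1
    have h4 : δ^2 ≤ (e k)^2 := by
      nlinarith [sq_abs (e k), abs_nonneg (e k)]
    nlinarith [mul_le_mul_of_nonneg_left h4 (le_of_lt hAβ)]
  constructor
  · -- positive invariance
    intro k hk j hkj
    induction j, hkj using Nat.le_induction with
    | base => exact hk
    | succ n hn ih => exact hdec1 n ih
  · intro h0
    -- the region S_ε is invariant
    have hinv : ∀ k, |e k| ≤ ε := by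
      intro k
      induction k with
      | zero => exact h0
      | succ n ih =>
        rcases lt_or_ge (|e n|) δ with hl | hl
        · exact le_of_lt (lt_trans (hdec1 n hl) hC3)
        · have h2 := hdec2 n ih hl
          have h3 : (e (n+1))^2 ≤ (|e n|)^2 := by
            nlinarith [sq_abs (e n), sq_nonneg (e n)]
          exact le_trans (abs_le_of_sq_le' _ _ (abs_nonneg _) h3) ih
    have hb0 : (0:ℝ) ≤ 1-β := by linarith
    have hb1 : 1-β < 1 := by linarith
    -- key disjunction
    have hP : ∀ k, |e k| < δ ∨ (e k)^2 ≤ (1-β)^k * ε^2 := by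
      intro k
      induction k with
      | zero =>
        right
        simp only [pow_zero, one_mul]
        nlinarith [sq_abs (e 0), abs_nonneg (e 0)]
      | succ n ih =>
        rcases lt_or_ge (|e n|) δ with hl | hl
        · left; exact hdec1 n hl
        · rcases ih with ih | ih
          · exact absurd ih (not_lt.2 hl)
          · right
            have h2 := hdec2 n (hinv n) hl
            calc (e (n+1))^2 ≤ (1-β)*(e n)^2 := h2
              _ ≤ (1-β)*((1-β)^n*ε^2) := mul_le_mul_of_nonneg_left ih hb0
              _ = (1-β)^(n+1)*ε^2 := by ring
    obtain ⟨K, hK⟩ : ∃ K, (1-β)^K < δ^2/ε^2 :=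
      exists_pow_lt_of_lt_one (by positivity) hb1
    refine ⟨hinv, K, fun k hk => ?_⟩
    rcases hP k with hcase | hcase
    · exact hcase
    · have hmono : (1-β)^k ≤ (1-β)^K :=
        pow_le_pow_of_le_one hb0 (by linarith) hk
      have hlt : (e k)^2 < δ^2 := by
        calc (e k)^2 ≤ (1-β)^k * ε^2 := hcase
          _ ≤ (1-β)^K * ε^2 := mul_le_mul_of_nonneg_right hmono (sq_nonneg ε)
          _ < (δ^2/ε^2) * ε^2 := mul_lt_mul_of_pos_right hK (by positivity)
          _ = δ^2 := by field_simp
      exact abs_lt_of_sq_lt' _ _ hδ0.le hlt
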